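/- Let n be even and let C ⊆ F4^n be an F4-linear skew-cyclic code of dimension k and minimum distance d. Then there exists a permutation π of {1, …, 2n} such that the permuted code C' = {(v_{π(1)}, …, v_{π(2n)}) : v ∈ S(C)} is an additive 2-quasi-cyclic code of length 2n with 2^{2k} codewords and minimum distance 2d: C' is an additive subgroup of F4^{2n} invariant under the cyclic coordinate shift by two positions. -/

import Mathlib

abbrev F4 : Type := GaloisField 2 2
noncomputable instance : Fintype F4 := Fintype.ofFinite _
noncomputable instance : DecidableEq F4 := Classical.decEq _

/-- The map `S : F4^n → F4^{2n}`, sending `(v_0,…,v_{n-1})` to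
`(v_0, v_0², v_1, v_1², …, v_{n-1}, v_{n-1}²)` (conjugation on `F4` is squaring). -/
noncomputable def Smap (n : ℕ) (v : Fin n → F4) : Fin (2 * n) → F4 :=
  fun i =>
    if i.val % 2 = 0 then v ⟨i.val / 2, by have h := i.isLt; omega⟩
    else (v ⟨i.val / 2, by have h := i.isLt; omega⟩) ^ 2

/-- The code obtained from `C` by permuting coordinates by `π`:
`v' = (v_{π(1)}, …, v_{π(m)})` for `v ∈ C`. -/
def permCode {m : ℕ} (π : Equiv.Perm (Fin m)) (C : Set (Fin m → F4)) :
    Set (Fin m → F4) :=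
  (fun v => fun i => v (π i)) '' C

/-- The minimum Hamming weight of the nonzero elements of a code, which is the
minimum distance of an additive code. -/
noncomputable def minWt {m : ℕ} (C : Set (Fin m → F4)) : ℕ :=
  sInf {r : ℕ | ∃ v ∈ C, v ≠ 0 ∧ r = hammingNorm v}

/- ### Auxiliary material -/

lemma F4_card : Fintype.card F4 = 4 := by
  have h := GaloisField.card 2 2 (by norm_num)
  rwa [Nat.card_eq_fintype_card] at h

lemma F4_pow_four (x : F4) : (x ^ 2) ^ 2 = x := by
  calc (x ^ 2) ^ 2 = x ^ Fintype.card F4 := by rw [← pow_mul, F4_card]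
  _ = x := FiniteField.pow_card x

/-- The permutation function: within each even/odd-indexed pair, swap the two
entries iff the pair index is odd. -/
def piFun (n : ℕ) (i : Fin (2 * n)) : Fin (2 * n) :=
  if (i.val / 2) % 2 = 0 then i
  else ⟨2 * (i.val / 2) + (1 - i.val % 2), by have := i.isLt; omega⟩

lemma piFun_involutive (n : ℕ) : Function.Involutive (piFun n) := by
  intro i
  by_cases h : (i.val / 2) % 2 = 0
  · simp [piFun, h]
  · have h1 : piFun n i = ⟨2 * (i.val / 2) + (1 - i.val % 2), by have := i.isLt; omega⟩ := by
      simp [piFun, h]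
    rw [h1]
    have h2 : ¬ (((⟨2 * (i.val / 2) + (1 - i.val % 2), by have := i.isLt; omega⟩ :
        Fin (2 * n)).val / 2) % 2 = 0) := by
      show ¬ ((2 * (i.val / 2) + (1 - i.val % 2)) / 2) % 2 = 0
      omega
    simp only [piFun, if_neg h2]
    apply Fin.ext
    show 2 * ((2 * (i.val / 2) + (1 - i.val % 2)) / 2)
      + (1 - (2 * (i.val / 2) + (1 - i.val % 2)) % 2) = i.val
    omega

/-- The permutation itself. -/
def piPerm (n : ℕ) : Equiv.Perm (Fin (2 * n)) :=
  Function.Involutive.toPerm _ (piFun_involutive n)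

lemma piPerm_apply (n : ℕ) (i : Fin (2 * n)) : piPerm n i = piFun n i := rfl

lemma smap_mk (n : ℕ) (v : Fin n → F4) (x : ℕ) (hx : x < 2 * n) :
    Smap n v ⟨x, hx⟩ = if x % 2 = 0 then v ⟨x / 2, by omega⟩
      else (v ⟨x / 2, by omega⟩) ^ 2 := rfl

lemma smap_zero (n : ℕ) : Smap n (0 : Fin n → F4) = 0 := by
  funext i
  simp only [Smap, Pi.zero_apply]
  split <;> simp

lemma smap_add (n : ℕ) (u v : Fin n → F4) :
    Smap n (u + v) = Smap n u + Smap n v := by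
  funext i
  simp only [Smap, Pi.add_apply]
  split
  · rfl
  · exact CharTwo.add_sq _ _

lemma smap_inj (n : ℕ) : Function.Injective (Smap n) := by
  intro u v h
  funext j
  have hj : (2 * j.val) < 2 * n := by have := j.isLt; omega
  have := congrFun h ⟨2 * j.val, hj⟩
  rw [smap_mk, smap_mk] at this
  simp only [Nat.mul_mod_right, if_pos rfl] at this
  have h1 : u ⟨2 * j.val / 2, by omega⟩ = u j := by
    congr 1
    apply Fin.ext
    show 2 * j.val / 2 = j.val
    omega
  have h2 : v ⟨2 * j.val / 2, by omega⟩ = v j := by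
    congr 1
    apply Fin.ext
    show 2 * j.val / 2 = j.val
    omega
  rw [h1, h2] at this
  exact this

lemma smap_ne_zero_iff (n : ℕ) (v : Fin n → F4) (x : ℕ) (hx : x < 2 * n) :
    Smap n v ⟨x, hx⟩ ≠ 0 ↔ v ⟨x / 2, by omega⟩ ≠ 0 := by
  rw [smap_mk]
  split
  · exact Iff.rfl
  · exact pow_ne_zero_iff (by norm_num)

open Fin.NatCast in
/-- value of `Fin` subtraction of `2` in `Fin (2*n)`. -/
lemma sub_two_val (n : ℕ) [NeZero n] (hn : 2 ≤ n) (i : Fin (2 * n)) :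
    (i - 2).val = 2 * ((n - 1 + i.val / 2) % n) + i.val % 2 := by
  have h2 : ((2 : Fin (2 * n))).val = 2 := by
    have h : (2 : Fin (2 * n)) = ((2 : ℕ) : Fin (2 * n)) := by norm_cast
    rw [h, Fin.val_cast_of_lt (by omega)]
  rw [Fin.sub_def]
  simp only [h2]
  have hx := i.isLt
  rcases Nat.lt_or_ge i.val 2 with h | h
  · have e1 : (2 * n - 2 + i.val) % (2 * n) = 2 * n - 2 + i.val := Nat.mod_eq_of_lt (by omega)
    have e2 : i.val / 2 = 0 := by omega
    have e3 : (n - 1 + 0) % n = n - 1 := by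
      rw [Nat.add_zero]; exact Nat.mod_eq_of_lt (by omega)
    rw [e1, e2, e3]
    omega
  · have e1 : 2 * n - 2 + i.val = (i.val - 2) + 2 * n := by omega
    rw [e1, Nat.add_mod_right, Nat.mod_eq_of_lt (by omega)]
    have hq : 1 ≤ i.val / 2 := by omega
    have e2 : n - 1 + i.val / 2 = (i.val / 2 - 1) + n := by omega
    rw [e2, Nat.add_mod_right, Nat.mod_eq_of_lt (by omega)]
    omega

open Fin.NatCast in
lemma sub_one_val (n : ℕ) [NeZero n] (hn : 2 ≤ n) (j : Fin n) :
    (j - 1).val = (n - 1 + j.val) % n := by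
  have h1 : ((1 : Fin n)).val = 1 := by
    have h : (1 : Fin n) = ((1 : ℕ) : Fin n) := by norm_cast
    rw [h, Fin.val_cast_of_lt (by omega)]
  rw [Fin.sub_def, h1]

/-- Applying `piFun` inside `Smap` conjugates iff the pair index is odd. -/
lemma smap_piFun (n : ℕ) (v : Fin n → F4) (i : Fin (2 * n)) :
    Smap n v (piFun n i) =
      if (i.val / 2) % 2 = 0 then Smap n v i else (Smap n v i) ^ 2 := by
  by_cases h : (i.val / 2) % 2 = 0
  · simp [piFun, h]
  · simp only [piFun, if_neg h]
    obtain ⟨x, hx⟩ := i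
    simp only at h ⊢
    rw [smap_mk, smap_mk]
    have hidx : (⟨(2 * (x / 2) + (1 - x % 2)) / 2, by omega⟩ : Fin n)
        = ⟨x / 2, by omega⟩ := by
      apply Fin.ext
      show (2 * (x / 2) + (1 - x % 2)) / 2 = x / 2
      omega
    rcases Nat.eq_zero_or_pos (x % 2) with hr | hr
    · rw [if_neg (by omega), if_pos hr, hidx]
    · rw [if_pos (by omega), if_neg (by omega), hidx, F4_pow_four]

/-- The skew-shifted vector maps under `Smap` to the square of the `2`-shifted image. -/
lemma smap_skew (n : ℕ) [NeZero n] (hn : 2 ≤ n) (v : Fin n → F4) (i : Fin (2 * n)) :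
    Smap n (fun j : Fin n => (v (j - 1)) ^ 2) i = (Smap n v (i - 2)) ^ 2 := by
  obtain ⟨x, hx⟩ := i
  have hs := sub_two_val n hn ⟨x, hx⟩
  have hp : (n - 1 + x / 2) % n < n := Nat.mod_lt _ (by omega)
  have hi2 : ((⟨x, hx⟩ : Fin (2 * n)) - 2)
      = ⟨2 * ((n - 1 + x / 2) % n) + x % 2, by omega⟩ := Fin.ext hs
  rw [hi2, smap_mk, smap_mk]
  have hd : (2 * ((n - 1 + x / 2) % n) + x % 2) / 2 = (n - 1 + x / 2) % n := by omega
  have hm : (2 * ((n - 1 + x / 2) % n) + x % 2) % 2 = x % 2 := by omega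
  have hsub : ((⟨x / 2, by omega⟩ : Fin n) - 1) = ⟨(n - 1 + x / 2) % n, hp⟩ :=
    Fin.ext (sub_one_val n hn _)
  have hidx : (⟨(2 * ((n - 1 + x / 2) % n) + x % 2) / 2, by omega⟩ : Fin n)
      = ⟨(n - 1 + x / 2) % n, hp⟩ := by
    apply Fin.ext
    exact hd
  rcases Nat.eq_zero_or_pos (x % 2) with hr | hr
  · rw [if_pos hr, if_pos (by omega), hidx]
    show (v ((⟨x / 2, by omega⟩ : Fin n) - 1)) ^ 2 = _
    rw [hsub]
  · rw [if_neg (by omega), if_neg (by omega), hidx]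
    show ((v ((⟨x / 2, by omega⟩ : Fin n) - 1)) ^ 2) ^ 2 = _
    rw [hsub]

/-- parity of the pair index flips when shifting by two (uses `n` even). -/
lemma parity_flip (n : ℕ) [NeZero n] (hn : 2 ≤ n) (hpar : n % 2 = 0) (i : Fin (2 * n)) :
    ((i - 2).val / 2) % 2 ≠ (i.val / 2) % 2 := by
  have hs := sub_two_val n hn i
  have hx := i.isLt
  have hqlt : i.val / 2 < n := by omega
  rcases Nat.eq_zero_or_pos (i.val / 2) with h0 | h0
  · have e : (n - 1 + i.val / 2) % n = n - 1 := by
      rw [h0, Nat.add_zero]; exact Nat.mod_eq_of_lt (by omega)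
    omega
  · have e2 : n - 1 + i.val / 2 = (i.val / 2 - 1) + n := by omega
    have e : (n - 1 + i.val / 2) % n = i.val / 2 - 1 := by
      rw [e2, Nat.add_mod_right, Nat.mod_eq_of_lt (by omega)]
    omega

/-- The key commutation: shifting by two after permuting corresponds to the
skew-cyclic shift before `Smap` and permuting. -/
lemma key_shift (n : ℕ) [NeZero n] (hn : 2 ≤ n) (hpar : n % 2 = 0) (v : Fin n → F4)
    (i : Fin (2 * n)) :
    Smap n v (piFun n (i - 2)) = Smap n (fun j : Fin n => (v (j - 1)) ^ 2) (piFun n i) := by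
  rw [smap_piFun, smap_piFun, smap_skew n hn]
  have hflip := parity_flip n hn hpar i
  by_cases h : (i.val / 2) % 2 = 0
  · rw [if_pos h, if_neg (by omega)]
  · rw [if_neg h, if_pos (by omega), F4_pow_four]

lemma smap_norm (n : ℕ) (v : Fin n → F4) : hammingNorm (Smap n v) = 2 * hammingNorm v := by
  unfold hammingNorm
  rw [show (2 * (Finset.filter (fun j : Fin n => v j ≠ 0) Finset.univ).card
      = ((Finset.filter (fun j : Fin n => v j ≠ 0) Finset.univ)
        ×ˢ (Finset.univ : Finset (Fin 2))).card)
      from by rw [Finset.card_product]; simp [mul_comm]]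
  refine Finset.card_bij'
    (i := fun a (_ : a ∈ Finset.filter (fun i : Fin (2 * n) => Smap n v i ≠ 0) Finset.univ) =>
      ((⟨a.val / 2, by have := a.isLt; omega⟩ : Fin n), (⟨a.val % 2, by omega⟩ : Fin 2)))
    (j := fun b _ => (⟨2 * b.1.val + b.2.val, by have := b.1.isLt; have := b.2.isLt; omega⟩ :
      Fin (2 * n)))
    ?hi ?hj ?li ?ri
  case hi =>
    intro a ha
    obtain ⟨x, hx⟩ := a
    simp only [Finset.mem_filter, Finset.mem_univ, true_and] at ha
    simp only [Finset.mem_product, Finset.mem_filter, Finset.mem_univ, true_and, and_true]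
    exact (smap_ne_zero_iff n v x hx).mp ha
  case hj =>
    intro b hb
    simp only [Finset.mem_product, Finset.mem_filter, Finset.mem_univ, true_and, and_true] at hb
    simp only [Finset.mem_filter, Finset.mem_univ, true_and]
    rw [smap_ne_zero_iff]
    have h2 := b.2.isLt
    have hidx : (⟨(2 * b.1.val + b.2.val) / 2, by have := b.1.isLt; omega⟩ : Fin n) = b.1 := by
      apply Fin.ext
      show (2 * b.1.val + b.2.val) / 2 = b.1.val
      omega
    rw [hidx]
    exact hb
  case li =>
    intro a _
    apply Fin.ext
    show 2 * (a.val / 2) + a.val % 2 = a.val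
    omega
  case ri =>
    intro b _
    obtain ⟨b1, b2⟩ := b
    have h2 := b2.isLt
    apply Prod.ext
    · apply Fin.ext
      show (2 * b1.val + b2.val) / 2 = b1.val
      omega
    · apply Fin.ext
      show (2 * b1.val + b2.val) % 2 = b2.val
      omega

lemma norm_comp_perm {m : ℕ} (π : Equiv.Perm (Fin m)) (w : Fin m → F4) :
    hammingNorm (fun i => w (π i)) = hammingNorm w := by
  unfold hammingNorm
  refine Finset.card_bij' (i := fun a _ => π a) (j := fun b _ => π.symm b) ?hi ?hj ?li ?ri
  case hi =>
    intro a ha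
    simp only [Finset.mem_filter, Finset.mem_univ, true_and] at ha ⊢
    exact ha
  case hj =>
    intro b hb
    simp only [Finset.mem_filter, Finset.mem_univ, true_and] at hb ⊢
    simpa using hb
  case li => intro a _; simp
  case ri => intro b _; simp

lemma sInf_two_mul (s : Set ℕ) : sInf ((fun r => 2 * r) '' s) = 2 * sInf s := by
  rcases s.eq_empty_or_nonempty with h | h
  · simp [h]
  · apply le_antisymm
    · exact Nat.sInf_le ⟨_, Nat.sInf_mem h, rfl⟩
    · apply le_csInf (h.image _)
      rintro b ⟨a, ha, rfl⟩
      exact Nat.mul_le_mul_left 2 (Nat.sInf_le ha)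

/-- Let `n` be even and `C ⊆ F4^n` an `F4`-linear skew-cyclic code of
dimension `k` and minimum distance `d`.  Then some coordinate permutation of `S(C)`
is an additive 2-quasi-cyclic code of length `2n` with `2^{2k}` codewords and minimum
distance `2d`. -/
theorem Smap_skewCyclic_even_equiv_additive_quasiCyclic (n k d : ℕ) [NeZero n] (heven : Even n)
    (C : Submodule F4 (Fin n → F4))
    (hskew : ∀ v ∈ C, (fun i : Fin n => (v (i - 1)) ^ 2) ∈ C)
    (hk : Module.finrank F4 C = k)
    (hd : minWt (C : Set (Fin n → F4)) = d) :
    ∃ π : Equiv.Perm (Fin (2 * n)),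
      (0 : Fin (2 * n) → F4) ∈ permCode π (Smap n '' (C : Set (Fin n → F4))) ∧
      (∀ u ∈ permCode π (Smap n '' (C : Set (Fin n → F4))),
        ∀ w ∈ permCode π (Smap n '' (C : Set (Fin n → F4))),
          u + w ∈ permCode π (Smap n '' (C : Set (Fin n → F4)))) ∧
      (∀ u ∈ permCode π (Smap n '' (C : Set (Fin n → F4))),
          -u ∈ permCode π (Smap n '' (C : Set (Fin n → F4)))) ∧
      (∀ w ∈ permCode π (Smap n '' (C : Set (Fin n → F4))),
          (fun i : Fin (2 * n) => w (i - 2)) ∈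
            permCode π (Smap n '' (C : Set (Fin n → F4)))) ∧
      (permCode π (Smap n '' (C : Set (Fin n → F4)))).ncard = 2 ^ (2 * k) ∧
      minWt (permCode π (Smap n '' (C : Set (Fin n → F4)))) = 2 * d := by
  have hn0 : n ≠ 0 := NeZero.ne n
  have hpar : n % 2 = 0 := Nat.even_iff.mp heven
  have hn : 2 ≤ n := by omega
  refine ⟨piPerm n, ?_, ?_, ?_, ?_, ?_, ?_⟩
  · -- zero
    exact ⟨Smap n 0, ⟨0, C.zero_mem, rfl⟩, by
      funext i; rw [smap_zero]; rfl⟩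
  · -- addition
    rintro u ⟨su, ⟨a, ha, rfl⟩, rfl⟩ w ⟨sw, ⟨b, hb, rfl⟩, rfl⟩
    exact ⟨Smap n (a + b), ⟨a + b, C.add_mem ha hb, rfl⟩, by
      funext i; rw [smap_add]; rfl⟩
  · -- negation (characteristic 2)
    rintro u ⟨su, ⟨a, ha, rfl⟩, rfl⟩
    have : -(fun i => Smap n a ((piPerm n) i)) = fun i => Smap n a ((piPerm n) i) := by
      funext i
      exact CharTwo.neg_eq _
    rw [this]
    exact ⟨Smap n a, ⟨a, ha, rfl⟩, rfl⟩
  · -- quasi-cyclicity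
    rintro w ⟨sw, ⟨a, ha, rfl⟩, rfl⟩
    refine ⟨Smap n (fun j : Fin n => (a (j - 1)) ^ 2), ⟨_, hskew a ha, rfl⟩, ?_⟩
    funext i
    simp only [piPerm_apply]
    exact (key_shift n hn hpar a i).symm
  · -- cardinality
    have hinj1 : Function.Injective (fun v : Fin (2 * n) → F4 => fun i => v ((piPerm n) i)) := by
      intro a b hab
      funext i
      have := congrFun hab ((piPerm n).symm i)
      simpa using this
    rw [permCode, Set.ncard_image_of_injective _ hinj1,
      Set.ncard_image_of_injective _ (smap_inj n)]
    have h2 : Nat.card C = 2 ^ (2 * k) := by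
      letI : Fintype C := Fintype.ofFinite _
      rw [Nat.card_eq_fintype_card, Module.card_eq_pow_finrank (K := F4), F4_card, hk]
      rw [show (4 : ℕ) = 2 ^ 2 by norm_num, ← pow_mul]
    rw [← Nat.card_coe_set_eq]
    exact h2
  · -- minimum distance
    have hset : {r : ℕ | ∃ w ∈ permCode (piPerm n) (Smap n '' (C : Set (Fin n → F4))),
          w ≠ 0 ∧ r = hammingNorm w}
        = (fun r => 2 * r) '' {r : ℕ | ∃ v ∈ (C : Set (Fin n → F4)),
          v ≠ 0 ∧ r = hammingNorm v} := by
      ext r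
      constructor
      · rintro ⟨w, ⟨sw, ⟨a, ha, rfl⟩, rfl⟩, hw0, rfl⟩
        refine ⟨hammingNorm a, ⟨a, ha, ?_, rfl⟩, ?_⟩
        · rintro rfl
          apply hw0
          funext i; rw [smap_zero]; rfl
        · rw [norm_comp_perm, smap_norm]
      · rintro ⟨r', ⟨a, ha, ha0, rfl⟩, rfl⟩
        refine ⟨fun i => Smap n a ((piPerm n) i), ⟨Smap n a, ⟨a, ha, rfl⟩, rfl⟩, ?_, ?_⟩
        · intro h0
          apply ha0
          apply smap_inj n
          rw [smap_zero]
          funext i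
          have := congrFun h0 ((piPerm n).symm i)
          simpa using this
        · rw [norm_comp_perm, smap_norm]
    rw [minWt, hset, sInf_two_mul]
    rw [minWt] at hd
    rw [hd]
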